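/- For fixed Jacobi energy c < −3/2, the cubic equation 2E(c−E)² + 1 = 0 in E has exactly three real solutions E₁ < E₂ < −1/2 < E₃ < 0. -/
import Mathlib

/-- If x and y are distinct roots of the cubic, a symmetric quadratic relation holds. -/
lemma quad_rel (c x y : ℝ) (hx : 2 * x * (c - x) ^ 2 + 1 = 0)
    (hy : 2 * y * (c - y) ^ 2 + 1 = 0) (hxy : x ≠ y) :
    2 * (x ^ 2 + x * y + y ^ 2) - 4 * c * (x + y) + 2 * c ^ 2 = 0 := by
  have h : (x - y) * (2 * (x ^ 2 + x * y + y ^ 2) - 4 * c * (x + y) + 2 * c ^ 2) = 0 := by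
    linear_combination hx - hy
  rcases mul_eq_zero.1 h with h' | h'
  · exact absurd (sub_eq_zero.1 h') hxy
  · exact h'

lemma sum_rel (c x a b : ℝ)
    (h1 : 2 * (x ^ 2 + x * a + a ^ 2) - 4 * c * (x + a) + 2 * c ^ 2 = 0)
    (h2 : 2 * (x ^ 2 + x * b + b ^ 2) - 4 * c * (x + b) + 2 * c ^ 2 = 0)
    (hab : a ≠ b) : x = 2 * c - a - b := by
  have h : (a - b) * (2 * a + 2 * b + 2 * x - 4 * c) = 0 := by linear_combination h1 - h2
  rcases mul_eq_zero.1 h with h' | h'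
  · exact absurd (sub_eq_zero.1 h') hab
  · linarith

/-- For fixed Jacobi energy c < −3/2, the cubic 2E(c−E)² + 1 = 0 has exactly
three real solutions E₁ < E₂ < −1/2 < E₃ < 0. -/
theorem stmt_12 (c : ℝ) (hc : c < -3 / 2) :
    ∃ E₁ E₂ E₃ : ℝ, E₁ < E₂ ∧ E₂ < -(1 / 2) ∧ -(1 / 2) < E₃ ∧ E₃ < 0 ∧
      2 * E₁ * (c - E₁) ^ 2 + 1 = 0 ∧ 2 * E₂ * (c - E₂) ^ 2 + 1 = 0 ∧
      2 * E₃ * (c - E₃) ^ 2 + 1 = 0 ∧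
      ∀ E : ℝ, 2 * E * (c - E) ^ 2 + 1 = 0 → E = E₁ ∨ E = E₂ ∨ E = E₃ := by
  set f : ℝ → ℝ := fun E => 2 * E * (c - E) ^ 2 + 1 with hf
  have hcont : Continuous f := by fun_prop
  have hfc : f c = 1 := by simp [hf]
  have hfc1 : f (c - 1) < 0 := by simp only [hf]; nlinarith
  have hfh : f (-(1/2)) < 0 := by simp only [hf]; nlinarith [sq_nonneg (c + 3/2)]
  have hf0 : f 0 = 1 := by simp [hf]
  -- E₁ ∈ (c-1, c)
  have h1 : (0:ℝ) ∈ Set.Ioo (f (c-1)) (f c) := ⟨hfc1, by rw [hfc]; norm_num⟩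
  obtain ⟨E₁, hE₁m, hE₁⟩ := intermediate_value_Ioo (by linarith) hcont.continuousOn h1
  -- E₂ ∈ (c, -1/2)
  have h2 : (0:ℝ) ∈ Set.Ioo (f (-(1/2))) (f c) := ⟨hfh, by rw [hfc]; norm_num⟩
  obtain ⟨E₂, hE₂m, hE₂⟩ := intermediate_value_Ioo' (by linarith) hcont.continuousOn h2
  -- E₃ ∈ (-1/2, 0)
  have h3 : (0:ℝ) ∈ Set.Ioo (f (-(1/2))) (f 0) := ⟨hfh, by rw [hf0]; norm_num⟩
  obtain ⟨E₃, hE₃m, hE₃⟩ := intermediate_value_Ioo (by linarith) hcont.continuousOn h3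
  refine ⟨E₁, E₂, E₃, lt_trans hE₁m.2 hE₂m.1, hE₂m.2, hE₃m.1, hE₃m.2, hE₁, hE₂, hE₃, ?_⟩
  have h12 : E₁ ≠ E₂ := ne_of_lt (lt_trans hE₁m.2 hE₂m.1)
  have h13 : E₁ ≠ E₃ := by
    have : E₁ < E₃ := lt_trans (lt_trans hE₁m.2 hE₂m.1) (lt_trans hE₂m.2 hE₃m.1)
    exact ne_of_lt this
  have h23 : E₂ ≠ E₃ := ne_of_lt (lt_trans hE₂m.2 hE₃m.1)
  intro E hE
  by_contra hcon
  push_neg at hcon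
  obtain ⟨hne1, hne2, hne3⟩ := hcon
  have q1 := quad_rel c E E₁ hE hE₁ hne1
  have q2 := quad_rel c E E₂ hE hE₂ hne2
  have q3 := quad_rel c E₃ E₁ hE₃ hE₁ (Ne.symm h13)
  have q4 := quad_rel c E₃ E₂ hE₃ hE₂ (Ne.symm h23)
  have hx := sum_rel c E E₁ E₂ q1 q2 h12
  have hy := sum_rel c E₃ E₁ E₂ q3 q4 h12
  exact hne3 (hx.trans hy.symm)
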